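/- arXiv:1011.3986 — 4 statements merged into one kernel-verified Lean document; each statement's English description precedes it below -/
import Mathlib

section
/- Let m ≥ 3 be an odd integer. Every ℝ-linear map A : ℍ → ℍ that commutes with every element of G₁(m) is a real scalar multiple of the identity; that is, the natural action of G₁(m) on ℝ⁴ is absolutely irreducible. -/
noncomputable section

open Quaternion Real

/-- The quaternion `i`. -/
def qi : Quaternion ℝ := ⟨0, 1, 0, 0⟩
/-- The quaternion `j`. -/
def qj : Quaternion ℝ := ⟨0, 0, 1, 0⟩
/-- The quaternion `k`. -/
def qk : Quaternion ℝ := ⟨0, 0, 0, 1⟩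
/-- The unit quaternion `e_s = cos(π/s) + sin(π/s) i`. -/
def es (s : ℕ) : Quaternion ℝ := ⟨Real.cos (Real.pi / s), Real.sin (Real.pi / s), 0, 0⟩

lemma norm_eq_one_of_normSq {a : Quaternion ℝ} (h : Quaternion.normSq a = 1) : ‖a‖ = 1 := by
  have h2 : ‖a‖ * ‖a‖ = 1 := by rw [← Quaternion.normSq_eq_norm_mul_self, h]
  rcases mul_self_eq_one_iff.1 h2 with h' | h'
  · exact h'
  · nlinarith [norm_nonneg a]

lemma norm_qi : ‖qi‖ = 1 := norm_eq_one_of_normSq (by rw [Quaternion.normSq_def']; simp [qi])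
lemma norm_qj : ‖qj‖ = 1 := norm_eq_one_of_normSq (by rw [Quaternion.normSq_def']; simp [qj])
lemma norm_qk : ‖qk‖ = 1 := norm_eq_one_of_normSq (by rw [Quaternion.normSq_def']; simp [qk])
lemma norm_es (s : ℕ) : ‖es s‖ = 1 :=
  norm_eq_one_of_normSq (by
    rw [Quaternion.normSq_def']
    simp [es, Real.sin_sq_add_cos_sq, Real.cos_sq_add_sin_sq])

lemma self_mul_star_of_norm_one {a : Quaternion ℝ} (h : ‖a‖ = 1) : a * star a = 1 := by
  rw [Quaternion.self_mul_star]
  have h1 : Quaternion.normSq a = 1 := by rw [Quaternion.normSq_eq_norm_mul_self, h, mul_one]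
  rw [h1]; norm_num

lemma star_mul_self_of_norm_one {a : Quaternion ℝ} (h : ‖a‖ = 1) : star a * a = 1 := by
  rw [Quaternion.star_mul_self]
  have h1 : Quaternion.normSq a = 1 := by rw [Quaternion.normSq_eq_norm_mul_self, h, mul_one]
  rw [h1]; norm_num

/-- The rotation `[l,r] : x ↦ l̄ x r` of `ℝ⁴ ≅ ℍ`, for unit quaternions `l, r`. -/
def qrot (l r : Quaternion ℝ) (hl : ‖l‖ = 1) (hr : ‖r‖ = 1) :
    Quaternion ℝ ≃ₗ[ℝ] Quaternion ℝ where
  toFun x := star l * x * r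
  invFun x := l * x * star r
  map_add' x y := by noncomm_ring
  map_smul' c x := by simp [mul_smul_comm, smul_mul_assoc]
  left_inv x := by
    have h : l * (star l * x * r) * star r = (l * star l) * x * (r * star r) := by noncomm_ring
    simp [h, self_mul_star_of_norm_one hl, self_mul_star_of_norm_one hr]
  right_inv x := by
    have h : star l * (l * x * star r) * r = (star l * l) * x * (star r * r) := by noncomm_ring
    simp [h, star_mul_self_of_norm_one hl, star_mul_self_of_norm_one hr]

/-- The group `G₁(m)`. -/
def G1 (m : ℕ) : Subgroup (Quaternion ℝ ≃ₗ[ℝ] Quaternion ℝ) :=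
  Subgroup.closure
    {qrot (es m) 1 (norm_es m) norm_one,
     qrot 1 qi norm_one norm_qi,
     qrot 1 qj norm_one norm_qj,
     qrot qj (es 4) norm_qj (norm_es 4)}

/-- The group `G₂(m)`. -/
def G2 (m : ℕ) : Subgroup (Quaternion ℝ ≃ₗ[ℝ] Quaternion ℝ) :=
  Subgroup.closure
    {qrot (es m) 1 (norm_es m) norm_one,
     qrot 1 qi norm_one norm_qi,
     qrot (es (2 * m)) qj (norm_es (2 * m)) norm_qj,
     qrot qj (es 4) norm_qj (norm_es 4)}

/-- The group `G₃(m)`. -/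
def G3 (m : ℕ) : Subgroup (Quaternion ℝ ≃ₗ[ℝ] Quaternion ℝ) :=
  Subgroup.closure
    {qrot (es m) 1 (norm_es m) norm_one,
     qrot 1 qi norm_one norm_qi,
     qrot qj 1 norm_qj norm_one,
     qrot 1 qj norm_one norm_qj}

/-- The group `F₁(m)`. -/
def F1 (m : ℕ) : Subgroup (Quaternion ℝ ≃ₗ[ℝ] Quaternion ℝ) :=
  Subgroup.closure
    {qrot (es m) qi (norm_es m) norm_qi,
     qrot 1 qj norm_one norm_qj}


@[simp] lemma qi_re : qi.re = 0 := rfl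
@[simp] lemma qi_imI : qi.imI = 1 := rfl
@[simp] lemma qi_imJ : qi.imJ = 0 := rfl
@[simp] lemma qi_imK : qi.imK = 0 := rfl
@[simp] lemma qj_re : qj.re = 0 := rfl
@[simp] lemma qj_imI : qj.imI = 0 := rfl
@[simp] lemma qj_imJ : qj.imJ = 1 := rfl
@[simp] lemma qj_imK : qj.imK = 0 := rfl
@[simp] lemma es_re (s : ℕ) : (es s).re = Real.cos (Real.pi / s) := rfl
@[simp] lemma es_imI (s : ℕ) : (es s).imI = Real.sin (Real.pi / s) := rfl
@[simp] lemma es_imJ (s : ℕ) : (es s).imJ = 0 := rfl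
@[simp] lemma es_imK (s : ℕ) : (es s).imK = 0 := rfl

lemma qrot_apply (l r : Quaternion ℝ) (hl : ‖l‖ = 1) (hr : ‖r‖ = 1) (x : Quaternion ℝ) :
    qrot l r hl hr x = star l * x * r := rfl

/-- The natural action of `G₁(m)` on `ℝ⁴ ≅ ℍ` is absolutely irreducible: every
`ℝ`-linear map commuting with all of `G₁(m)` is a real scalar multiple of the identity. -/
theorem G1_absolutely_irreducible (m : ℕ) (hm : 3 ≤ m) (hodd : Odd m)
    (A : Quaternion ℝ →ₗ[ℝ] Quaternion ℝ)
    (hA : ∀ g ∈ G1 m, ∀ x : Quaternion ℝ, A (g x) = g (A x)) :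
    ∃ c : ℝ, A = c • LinearMap.id := by
  have hg1 : qrot (es m) 1 (norm_es m) norm_one ∈ G1 m := Subgroup.subset_closure (by simp)
  have hg2 : qrot 1 qi norm_one norm_qi ∈ G1 m := Subgroup.subset_closure (by simp)
  have hg3 : qrot 1 qj norm_one norm_qj ∈ G1 m := Subgroup.subset_closure (by simp)
  have hg4 : qrot qj (es 4) norm_qj (norm_es 4) ∈ G1 m := Subgroup.subset_closure (by simp)
  have hAi : ∀ x, A (x * qi) = A x * qi := fun x => by
    simpa [qrot_apply] using hA _ hg2 x
  have hAj : ∀ x, A (x * qj) = A x * qj := fun x => by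
    simpa [qrot_apply] using hA _ hg3 x
  have h1 : A qi = A 1 * qi := by simpa using hAi 1
  have h2 : A qj = A 1 * qj := by simpa using hAj 1
  have h3 : A (qi * qj) = A 1 * (qi * qj) := by
    rw [hAj qi, h1, mul_assoc]
  have key : ∀ x : Quaternion ℝ, A x = A 1 * x := by
    intro x
    have hx : x = x.re • 1 + x.imI • qi + x.imJ • qj + x.imK • (qi * qj) := by
      ext <;> simp [Quaternion.imI_mul, Quaternion.imJ_mul, Quaternion.imK_mul, Quaternion.re_mul]
    calc A x = A (x.re • 1 + x.imI • qi + x.imJ • qj + x.imK • (qi*qj)) := by rw [← hx]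
    _ = x.re • A 1 + x.imI • A qi + x.imJ • A qj + x.imK • A (qi*qj) := by
        simp [map_add, map_smul]
    _ = A 1 * (x.re • 1 + x.imI • qi + x.imJ • qj + x.imK • (qi*qj)) := by
        rw [h1, h2, h3]; simp [mul_add, mul_smul_comm]
    _ = A 1 * x := by rw [← hx]
  have hc1 : A 1 * star (es m) = star (es m) * A 1 := by
    have h := hA _ hg1 1
    simp only [qrot_apply, mul_one] at h
    rwa [key (star (es m))] at h
  have hne4 : es 4 ≠ 0 := by
    intro h
    have := norm_es 4
    rw [h, norm_zero] at this
    norm_num at this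
  have hc2 : A 1 * star qj = star qj * A 1 := by
    have h := hA _ hg4 1
    simp only [qrot_apply, one_mul, mul_one] at h
    rw [key (star qj * es 4), ← mul_assoc] at h
    exact mul_right_cancel₀ hne4 h
  have hmr : (3:ℝ) ≤ (m:ℝ) := by exact_mod_cast hm
  have hs : Real.sin (Real.pi / m) ≠ 0 := by
    have h0 : 0 < Real.pi / m := div_pos Real.pi_pos (by linarith)
    have h1 : Real.pi / m < Real.pi := by
      rw [div_lt_iff₀ (by linarith)]
      nlinarith [Real.pi_pos]
    exact ne_of_gt (Real.sin_pos_of_pos_of_lt_pi h0 h1)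
  obtain ⟨p1, p2, p3, p4⟩ := Quaternion.ext_iff.mp hc1
  obtain ⟨r1, r2, r3, r4⟩ := Quaternion.ext_iff.mp hc2
  simp [Quaternion.imJ_mul, Quaternion.imK_mul] at p3 p4
  simp [Quaternion.imI_mul, Quaternion.imK_mul] at r2 r4
  -- derive that imaginary parts of A 1 vanish
  have hzK : (A 1).imK = 0 := by linarith
  have hzI : (A 1).imI = 0 := by linarith
  have hJ : Real.sin (Real.pi / m) * (A 1).imJ = 0 := by rw [hzK] at p4; linarith
  have hzJ : (A 1).imJ = 0 := (mul_eq_zero.mp hJ).resolve_left hs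
  refine ⟨(A 1).re, LinearMap.ext fun x => ?_⟩
  have hre : A 1 = ((A 1).re : Quaternion ℝ) := by
    ext <;> simp [hzI, hzJ, hzK]
  rw [LinearMap.smul_apply, LinearMap.id_apply, key x, hre, Quaternion.coe_mul_eq_smul]
  simp
end
end

section
/- Let m ≥ 3 be an odd integer and let r be an integer with 0 < r < 4m. If a quaternion x satisfies ē_mʳ·x·iʳ = x (i.e. x is fixed by the r-th power of the automorphism [e_m,i]), then x = 0. In other words, no nontrivial element of the cyclic group generated by [e_m,i] fixes a nonzero vector of ℝ⁴. -/
noncomputable section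

open Quaternion Real

/-- Auxiliary: the unit complex-plane quaternion at angle `θ`. -/
def cq (θ : ℝ) : Quaternion ℝ := ⟨Real.cos θ, Real.sin θ, 0, 0⟩

lemma cq_mul (u v : ℝ) : cq u * cq v = cq (u + v) := by
  ext <;> simp [Quaternion.re_mul, Quaternion.imI_mul, Quaternion.imJ_mul, Quaternion.imK_mul] <;> simp [cq, Real.cos_add, Real.sin_add] <;> ring

lemma star_cq (θ : ℝ) : star (cq θ) = cq (-θ) := by
  ext <;> simp [Quaternion.re_star, Quaternion.imI_star, Quaternion.imJ_star, Quaternion.imK_star] <;> simp [cq]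

lemma cq_pow (θ : ℝ) (n : ℕ) : cq θ ^ n = cq (n * θ) := by
  induction n with
  | zero => rw [pow_zero]; ext <;> simp [cq]
  | succ k ih =>
      rw [pow_succ, ih, cq_mul]
      push_cast; ring_nf

lemma es_eq_cq (m : ℕ) : es m = cq (Real.pi / m) := rfl

lemma qi_eq_cq : qi = cq (Real.pi / 2) := by
  ext <;> simp [qi, cq]

lemma rot_fix_zero (θ a b : ℝ) (hθ : Real.cos θ ≠ 1)
    (h1 : Real.cos θ * a - Real.sin θ * b = a)
    (h2 : Real.sin θ * a + Real.cos θ * b = b) : a = 0 ∧ b = 0 := by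
  set c := Real.cos θ
  set s := Real.sin θ
  have hsc : s^2 + c^2 = 1 := Real.sin_sq_add_cos_sq θ
  have hc1 : c < 1 := lt_of_le_of_ne (Real.cos_le_one θ) hθ
  have e1 : (1 - c) * a = -(s * b) := by linarith
  have e2 : s * a = (1 - c) * b := by linarith
  have key : ((1-c)^2 + s^2) * a = 0 := by linear_combination (1-c) * e1 + s * e2
  have hpos : 0 < (1-c)^2 + s^2 := by nlinarith
  have ha : a = 0 := by
    rcases mul_eq_zero.1 key with h | h
    · exact absurd h (ne_of_gt hpos)
    · exact h
  refine ⟨ha, ?_⟩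
  have : (1 - c) * b = 0 := by rw [← e2, ha, mul_zero]
  rcases mul_eq_zero.1 this with h | h
  · linarith
  · exact h

lemma nat_coprime_step (m : ℕ) (hm : 3 ≤ m) (hodd : Odd m) (k : ℕ)
    (hk : k = m - 2 ∨ k = m + 2) : Nat.Coprime (4*m) k := by
  obtain ⟨t, ht⟩ := hodd
  have hko : Odd k := by rcases hk with h|h; exacts [⟨t-1, by omega⟩, ⟨t+1, by omega⟩]
  have c4 : Nat.Coprime 4 k := by
    have := hko.coprime_two_left.pow_left 2; simpa using this
  have cm : Nat.Coprime m k := by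
    have hd2 : Nat.gcd m k ∣ 2 := by
      rcases hk with h|h
      · have := Nat.dvd_sub (Nat.gcd_dvd_left m k) (Nat.gcd_dvd_right m k)
        have hs : m - k = 2 := by omega
        rwa [hs] at this
      · have := Nat.dvd_sub (Nat.gcd_dvd_right m k) (Nat.gcd_dvd_left m k)
        have hs : k - m = 2 := by omega
        rwa [hs] at this
    have hdm : Nat.gcd m k ∣ m := Nat.gcd_dvd_left _ _
    have hle : Nat.gcd m k ≤ 2 := Nat.le_of_dvd (by norm_num) hd2
    interval_cases h : Nat.gcd m k
    · rcases hdm with ⟨u,hu⟩; omega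
    · exact h
    · rcases hdm with ⟨u,hu⟩; omega
  exact Nat.Coprime.mul c4 cm

lemma int_step (m r : ℕ) (hm : 3 ≤ m) (hodd : Odd m) (hr0 : 0 < r) (hr : r < 4*m)
    (k : ℕ) (hk : k = m - 2 ∨ k = m + 2) (n : ℤ) (h : 4 * (m:ℤ) * n = r * k) : False := by
  have hcop := nat_coprime_step m hm hodd k hk
  have hdvd : (4*(m:ℤ)) ∣ (r:ℤ) * k := ⟨n, by linarith⟩
  have hic : IsCoprime (4*(m:ℤ)) (k:ℤ) := by
    rw [Int.isCoprime_iff_gcd_eq_one]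
    simpa [Int.gcd, Int.natAbs_mul] using hcop
  have := hic.dvd_of_dvd_mul_right hdvd
  have := Int.le_of_dvd (by exact_mod_cast hr0) this
  omega

set_option maxHeartbeats 1000000 in
/-- No nontrivial power of `[e_m, i]` fixes a nonzero quaternion: if `0 < r < 4m`
and `ē_mʳ x iʳ = x` then `x = 0`. -/
theorem powers_of_em_i_fix_only_zero (m : ℕ) (hm : 3 ≤ m) (hodd : Odd m)
    (r : ℕ) (hr0 : 0 < r) (hr : r < 4 * m) (x : Quaternion ℝ)
    (hx : star (es m ^ r) * x * qi ^ r = x) : x = 0 := by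
  have hx' : cq ((r:ℝ) * -(Real.pi/m)) * x * cq ((r:ℝ) * (Real.pi/2)) = x := by
    rw [es_eq_cq, qi_eq_cq, star_pow, star_cq, cq_pow, cq_pow] at hx
    exact hx
  set A : ℝ := (r:ℝ) * -(Real.pi / m) with hA
  set B : ℝ := (r:ℝ) * (Real.pi / 2) with hB
  have hm0 : (m:ℝ) ≠ 0 := by positivity
  -- extract the four scalar equations
  have h1 := congrArg QuaternionAlgebra.re hx'
  have h2 := congrArg QuaternionAlgebra.imI hx'
  have h3 := congrArg QuaternionAlgebra.imJ hx'
  have h4 := congrArg QuaternionAlgebra.imK hx'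
  simp only [Quaternion.re_mul, Quaternion.imI_mul, Quaternion.imJ_mul, Quaternion.imK_mul] at h1 h2 h3 h4
  simp only [cq, Quaternion.re_mul, Quaternion.imI_mul, Quaternion.imJ_mul,
    Quaternion.imK_mul] at h1 h2 h3 h4
  have e1 : Real.cos (A+B) * x.re - Real.sin (A+B) * x.imI = x.re := by
    rw [Real.cos_add, Real.sin_add]; linear_combination h1
  have e2 : Real.sin (A+B) * x.re + Real.cos (A+B) * x.imI = x.imI := by
    rw [Real.cos_add, Real.sin_add]; linear_combination h2
  have e3 : Real.cos (A-B) * x.imJ - Real.sin (A-B) * x.imK = x.imJ := by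
    rw [Real.cos_sub, Real.sin_sub]; linear_combination h3
  have e4 : Real.sin (A-B) * x.imJ + Real.cos (A-B) * x.imK = x.imK := by
    rw [Real.cos_sub, Real.sin_sub]; linear_combination h4
  have hcos1 : Real.cos (A+B) ≠ 1 := by
    intro hc
    obtain ⟨n, hn⟩ := (Real.cos_eq_one_iff _).1 hc
    refine int_step m r hm hodd hr0 hr (m-2) (Or.inl rfl) n ?_
    rw [hA, hB] at hn
    have key : ((4 * (m:ℤ) * n : ℤ) : ℝ) * Real.pi = (((r:ℤ) * ((m:ℤ)-2) : ℤ) : ℝ) * Real.pi := by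
      push_cast
      field_simp at hn
      linear_combination Real.pi * hn
    have h5 : 4 * (m:ℤ) * n = (r:ℤ) * ((m:ℤ)-2) := by
      have := mul_right_cancel₀ Real.pi_ne_zero key
      exact_mod_cast this
    have hcast : ((m-2 : ℕ) : ℤ) = (m:ℤ) - 2 := by omega
    rw [hcast]; exact h5
  have hcos2 : Real.cos (A-B) ≠ 1 := by
    intro hc
    obtain ⟨n, hn⟩ := (Real.cos_eq_one_iff _).1 hc
    refine int_step m r hm hodd hr0 hr (m+2) (Or.inr rfl) (-n) ?_
    rw [hA, hB] at hn
    have key : ((4 * (m:ℤ) * (-n) : ℤ) : ℝ) * Real.pi = (((r:ℤ) * ((m:ℤ)+2) : ℤ) : ℝ) * Real.pi := by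
      push_cast
      field_simp at hn
      linear_combination -Real.pi * hn
    have h5 : 4 * (m:ℤ) * (-n) = (r:ℤ) * ((m:ℤ)+2) := by
      have := mul_right_cancel₀ Real.pi_ne_zero key
      exact_mod_cast this
    have hcast : ((m+2 : ℕ) : ℤ) = (m:ℤ) + 2 := by omega
    rw [hcast]; exact h5
  obtain ⟨hx1, hx2⟩ := rot_fix_zero (A+B) x.re x.imI hcos1 e1 e2
  obtain ⟨hx3, hx4⟩ := rot_fix_zero (A-B) x.imJ x.imK hcos2 e3 e4
  ext <;> simp [hx1, hx2, hx3, hx4]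
end
end

section
/- Let m ≥ 3 be an odd integer. For every integer r, the element g_r := [e_mʳ·j, iʳ·j·e₄] belongs to G₁(m) and satisfies g_r ∘ g_r = id (it is an involution different from the identity). Moreover, all these elements lie in a single conjugacy class of G₁(m): for all integers r and s there exists h ∈ G₁(m) with h·g_r·h⁻¹ = g_s. -/
noncomputable section

open Quaternion Real

lemma norm_gl (m : ℕ) (r : ℤ) : ‖es m ^ r * qj‖ = 1 := by
  rw [norm_mul, norm_zpow, norm_es, norm_qj, one_zpow, one_mul]

lemma norm_gr (r : ℤ) : ‖qi ^ r * qj * es 4‖ = 1 := by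
  rw [norm_mul, norm_mul, norm_zpow, norm_qi, norm_qj, norm_es, one_zpow, one_mul, one_mul]

/-- The element `g_r = [e_mʳ · j, iʳ · j · e₄]`. -/
def grot (m : ℕ) (r : ℤ) : Quaternion ℝ ≃ₗ[ℝ] Quaternion ℝ :=
  qrot (es m ^ r * qj) (qi ^ r * qj * es 4) (norm_gl m r) (norm_gr r)


/-! ### Auxiliary development -/

namespace QAux

/-- The unit quaternion of angle `θ` in the complex plane `span {1, i}`. -/
noncomputable def cq (θ : ℝ) : Quaternion ℝ := ⟨Real.cos θ, Real.sin θ, 0, 0⟩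

lemma norm_cq (θ : ℝ) : ‖cq θ‖ = 1 :=
  norm_eq_one_of_normSq (by
    rw [Quaternion.normSq_def']
    simp [cq])

lemma norm_cq_qj (θ : ℝ) : ‖cq θ * qj‖ = 1 := by
  rw [norm_mul, norm_cq, norm_qj, one_mul]

lemma cq_zero : cq 0 = 1 := by
  ext <;> simp [cq]

lemma cq_mul (a b : ℝ) : cq a * cq b = cq (a + b) := by
  ext <;> simp [Quaternion.re_mul, Quaternion.imI_mul, Quaternion.imJ_mul, Quaternion.imK_mul] <;>
    simp [cq, Real.cos_add, Real.sin_add] <;> ring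

lemma qj_mul_cq (a : ℝ) : qj * cq a = cq (-a) * qj := by
  ext <;> simp [Quaternion.re_mul, Quaternion.imI_mul, Quaternion.imJ_mul, Quaternion.imK_mul] <;> simp [cq, qj]

lemma qj_mul_qj : qj * qj = -1 := by
  ext <;> simp [Quaternion.re_mul, Quaternion.imI_mul, Quaternion.imJ_mul, Quaternion.imK_mul] <;> simp [qj]

lemma cq_add_pi (a : ℝ) : cq (a + π) = -cq a := by
  ext <;> simp <;> simp [cq, Real.cos_add, Real.sin_add]

lemma star_cq (a : ℝ) : star (cq a) = cq (-a) := by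
  ext <;> simp <;> simp [cq]

lemma star_qj : star qj = -qj := by
  ext <;> simp <;> simp [qj]

lemma cq_mul_cqj (a b : ℝ) : cq a * (cq b * qj) = cq (a + b) * qj := by
  rw [← mul_assoc, cq_mul]

lemma cqj_mul_cq (a b : ℝ) : (cq a * qj) * cq b = cq (a - b) * qj := by
  rw [mul_assoc, qj_mul_cq, ← mul_assoc, cq_mul, sub_eq_add_neg]

lemma cqj_mul_cqj (a b : ℝ) : (cq a * qj) * (cq b * qj) = cq (a - b + π) := by
  rw [← mul_assoc, cqj_mul_cq, mul_assoc, qj_mul_qj, cq_add_pi, mul_neg_one]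

lemma star_cqj (a : ℝ) : star (cq a * qj) = cq (a + π) * qj := by
  ext <;> simp [Quaternion.re_mul, Quaternion.imI_mul, Quaternion.imJ_mul, Quaternion.imK_mul] <;> simp [cq, qj, Real.cos_add, Real.sin_add]


lemma qrot_apply (l r : Quaternion ℝ) (hl hr) (x : Quaternion ℝ) :
    qrot l r hl hr x = star l * x * r := rfl

lemma qrot_congr {l r l' r' : Quaternion ℝ} (h1 : l = l') (h2 : r = r')
    (hl hr hl' hr') : qrot l r hl hr = qrot l' r' hl' hr' := by
  subst h1; subst h2; rfl

lemma qrot_mul (l1 r1 l2 r2 : Quaternion ℝ) (h1 h1' h2 h2') :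
    qrot l1 r1 h1 h1' * qrot l2 r2 h2 h2' =
      qrot (l2 * l1) (r2 * r1) (by rw [norm_mul, h2, h1, one_mul])
        (by rw [norm_mul, h2', h1', one_mul]) := by
  refine LinearEquiv.ext fun x => ?_
  show qrot l1 r1 h1 h1' (qrot l2 r2 h2 h2' x) = _
  simp only [qrot_apply, star_mul]
  noncomm_ring

lemma qrot_one (h h') : qrot 1 1 h h' = 1 := by
  refine LinearEquiv.ext fun x => ?_
  simp [qrot_apply]

lemma qrot_neg_neg (l r : Quaternion ℝ) (hl hr hl' hr') :
    qrot (-l) (-r) hl hr = qrot l r hl' hr' := by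
  refine LinearEquiv.ext fun x => ?_
  simp [qrot_apply]

/-- `[cq a, cq b]`. -/
noncomputable def rotA (a b : ℝ) : Quaternion ℝ ≃ₗ[ℝ] Quaternion ℝ :=
  qrot (cq a) (cq b) (norm_cq a) (norm_cq b)

/-- `[cq a, cq b * j]`. -/
noncomputable def rotB (a b : ℝ) : Quaternion ℝ ≃ₗ[ℝ] Quaternion ℝ :=
  qrot (cq a) (cq b * qj) (norm_cq a) (norm_cq_qj b)

/-- `[cq a * j, cq b]`. -/
noncomputable def rotD (a b : ℝ) : Quaternion ℝ ≃ₗ[ℝ] Quaternion ℝ :=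
  qrot (cq a * qj) (cq b) (norm_cq_qj a) (norm_cq b)

/-- `[cq a * j, cq b * j]`. -/
noncomputable def rotG (a b : ℝ) : Quaternion ℝ ≃ₗ[ℝ] Quaternion ℝ :=
  qrot (cq a * qj) (cq b * qj) (norm_cq_qj a) (norm_cq_qj b)

lemma rotA_mul (a b c d : ℝ) : rotA a b * rotA c d = rotA (a + c) (b + d) := by
  rw [rotA, rotA, qrot_mul]
  exact qrot_congr (by rw [cq_mul, add_comm]) (by rw [cq_mul, add_comm]) _ _ _ _

lemma rotA_zero : rotA 0 0 = 1 := by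
  rw [rotA, qrot_congr cq_zero cq_zero _ _ norm_one norm_one, qrot_one]

lemma rotA_pi_pi : rotA π π = 1 := by
  rw [rotA, qrot_congr (show cq π = -1 by rw [← zero_add π, cq_add_pi, cq_zero])
    (show cq π = -1 by rw [← zero_add π, cq_add_pi, cq_zero]) _ _ (by simp) (by simp),
    qrot_neg_neg _ _ _ _ norm_one norm_one, qrot_one]

lemma rotB_mul_rotA (a b c d : ℝ) : rotB a b * rotA c d = rotB (a + c) (b + d) := by
  rw [rotB, rotA, qrot_mul]
  exact qrot_congr (by rw [cq_mul, add_comm]) (by rw [cq_mul_cqj, add_comm]) _ _ _ _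

lemma rotD_mul_rotB (a b c d : ℝ) : rotD a b * rotB c d = rotG (c + a) (d - b) := by
  rw [rotD, rotB, qrot_mul]
  exact qrot_congr (by rw [cq_mul_cqj]) (by rw [cqj_mul_cq]) _ _ _ _

lemma rotA_mul_rotG (a b c d : ℝ) : rotA a b * rotG c d = rotG (c - a) (d - b) := by
  rw [rotA, rotG, qrot_mul]
  exact qrot_congr (by rw [cqj_mul_cq]) (by rw [cqj_mul_cq]) _ _ _ _

lemma rotG_mul_rotA (a b c d : ℝ) : rotG a b * rotA c d = rotG (c + a) (d + b) := by
  rw [rotG, rotA, qrot_mul]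
  exact qrot_congr (by rw [cq_mul_cqj]) (by rw [cq_mul_cqj]) _ _ _ _

lemma rotB_mul_rotG (a b c d : ℝ) : rotB a b * rotG c d = rotD (c - a) (d - b + π) := by
  rw [rotB, rotG, qrot_mul]
  exact qrot_congr (by rw [cqj_mul_cq]) (by rw [cqj_mul_cqj]) _ _ _ _

lemma rotG_mul_rotB (a b c d : ℝ) : rotG a b * rotB c d = rotD (c + a) (d - b + π) := by
  rw [rotG, rotB, qrot_mul]
  exact qrot_congr (by rw [cq_mul_cqj]) (by rw [cqj_mul_cqj]) _ _ _ _

lemma rotG_mul_rotG (a b c d : ℝ) : rotG a b * rotG c d = rotA (c - a + π) (d - b + π) := by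
  rw [rotG, rotG, qrot_mul]
  exact qrot_congr (by rw [cqj_mul_cqj]) (by rw [cqj_mul_cqj]) _ _ _ _

lemma rotD_pi (a b : ℝ) : rotD (a + π) (b + π) = rotD a b := by
  rw [rotD, rotD, qrot_congr (show cq (a + π) * qj = -(cq a * qj) by
      rw [cq_add_pi, neg_mul]) (cq_add_pi b) _ _ (by simpa using norm_cq_qj a)
      (by simpa using norm_cq b), qrot_neg_neg]

lemma rotA_pow (a b : ℝ) (n : ℕ) : rotA a b ^ n = rotA (n * a) (n * b) := by
  induction n with
  | zero => simp [rotA_zero]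
  | succ k ih =>
    rw [pow_succ, ih, rotA_mul]
    push_cast
    ring_nf

lemma rotA_inv (a b : ℝ) : (rotA a b)⁻¹ = rotA (-a) (-b) :=
  inv_eq_of_mul_eq_one_right (by rw [rotA_mul, add_neg_cancel, add_neg_cancel, rotA_zero])

lemma rotA_zpow (a b : ℝ) (n : ℤ) : rotA a b ^ n = rotA (n * a) (n * b) := by
  cases n with
  | ofNat k => rw [Int.ofNat_eq_coe, zpow_natCast, rotA_pow]; push_cast; ring_nf
  | negSucc k =>
    rw [zpow_negSucc, rotA_pow, rotA_inv, Int.cast_negSucc]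
    push_cast
    ring_nf


lemma cq_inv (a : ℝ) : (cq a)⁻¹ = cq (-a) :=
  inv_eq_of_mul_eq_one_right (by rw [cq_mul, add_neg_cancel, cq_zero])

lemma cq_pow (a : ℝ) (n : ℕ) : cq a ^ n = cq (n * a) := by
  induction n with
  | zero => simp [cq_zero]
  | succ k ih => rw [pow_succ, ih, cq_mul]; push_cast; ring_nf

lemma cq_zpow (a : ℝ) (n : ℤ) : cq a ^ n = cq (n * a) := by
  cases n with
  | ofNat k => rw [Int.ofNat_eq_coe, zpow_natCast, cq_pow]; push_cast; ring_nf
  | negSucc k =>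
    rw [zpow_negSucc, cq_pow, cq_inv, Int.cast_negSucc]
    push_cast
    ring_nf

lemma qi_eq_cq : qi = cq (π / 2) := by
  ext <;> simp [qi, cq]

lemma es4_eq_cq : es 4 = cq (π / 4) := by
  unfold es cq
  norm_num
  ext <;> rfl

lemma grot_eq (m : ℕ) (r : ℤ) :
    grot m r = rotG (r * (π / m)) (r * (π / 2) - π / 4) := by
  rw [grot, rotG]
  refine qrot_congr ?_ ?_ _ _ _ _
  · rw [show es m = cq (π / m) from rfl, cq_zpow]
  · rw [qi_eq_cq, es4_eq_cq, cq_zpow, mul_assoc, qj_mul_cq, ← mul_assoc, cq_mul,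
      ← sub_eq_add_neg]

lemma mem1 (m : ℕ) : rotA (π / m) 0 ∈ G1 m := by
  rw [rotA, qrot_congr (show cq (π / m) = es m from rfl) cq_zero _ _ (norm_es m) norm_one]
  exact Subgroup.subset_closure (Set.mem_insert _ _)

lemma mem2 (m : ℕ) : rotA 0 (π / 2) ∈ G1 m := by
  rw [rotA, qrot_congr cq_zero qi_eq_cq.symm _ _ norm_one norm_qi]
  exact Subgroup.subset_closure (Set.mem_insert_of_mem _ (Set.mem_insert _ _))

lemma mem3 (m : ℕ) : rotB 0 0 ∈ G1 m := by
  rw [rotB, qrot_congr cq_zero (by rw [cq_zero, one_mul] : cq 0 * qj = qj) _ _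
    norm_one norm_qj]
  exact Subgroup.subset_closure
    (Set.mem_insert_of_mem _ (Set.mem_insert_of_mem _ (Set.mem_insert _ _)))

lemma mem4 (m : ℕ) : rotD 0 (π / 4) ∈ G1 m := by
  rw [rotD, qrot_congr (by rw [cq_zero, one_mul] : cq 0 * qj = qj) es4_eq_cq.symm _ _
    norm_qj (norm_es 4)]
  exact Subgroup.subset_closure
    (Set.mem_insert_of_mem _ (Set.mem_insert_of_mem _ (Set.mem_insert_of_mem _ rfl)))

lemma rotA_mem (m : ℕ) (p q : ℤ) : rotA (p * (π / m)) (q * (π / 2)) ∈ G1 m := by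
  have h := mul_mem (zpow_mem (mem1 m) p) (zpow_mem (mem2 m) q)
  rw [rotA_zpow, rotA_zpow, rotA_mul] at h
  convert h using 2 <;> ring

lemma rotB_mem (m : ℕ) (p q : ℤ) : rotB (p * (π / m)) (q * (π / 2)) ∈ G1 m := by
  have h := mul_mem (mul_mem (mem3 m) (zpow_mem (mem2 m) q)) (zpow_mem (mem1 m) p)
  rw [rotA_zpow, rotA_zpow, rotB_mul_rotA, rotB_mul_rotA] at h
  convert h using 2 <;> ring

lemma rotG_ne_one (a b : ℝ) : rotG a b ≠ 1 := by
  intro h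
  have h1 : star (cq a * qj) * 1 * (cq b * qj) = (1 : Quaternion ℝ) := by
    have := LinearEquiv.congr_fun h (1 : Quaternion ℝ)
    rwa [show rotG a b (1 : Quaternion ℝ) = star (cq a * qj) * 1 * (cq b * qj) from rfl,
      show (1 : Quaternion ℝ ≃ₗ[ℝ] Quaternion ℝ) (1 : Quaternion ℝ) = 1 from rfl] at this
  have h2 : star (cq a * qj) * qi * (cq b * qj) = qi := by
    have := LinearEquiv.congr_fun h qi
    rwa [show rotG a b qi = star (cq a * qj) * qi * (cq b * qj) from rfl,
      show (1 : Quaternion ℝ ≃ₗ[ℝ] Quaternion ℝ) qi = qi from rfl] at this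
  have e1 := congrArg QuaternionAlgebra.re h1
  have e2 := congrArg QuaternionAlgebra.imI h2
  simp [Quaternion.re_mul, Quaternion.imI_mul, Quaternion.imJ_mul, Quaternion.imK_mul] at e1 e2
  simp [cq, qj, qi] at e1 e2
  nlinarith [Real.sin_sq_add_cos_sq a, Real.sin_sq_add_cos_sq b]

end QAux

open QAux

/-- Each `g_r = [e_mʳ j, iʳ j e₄]` lies in `G₁(m)` and is an involution (distinct
from the identity); moreover all the `g_r` are conjugate in `G₁(m)`. -/
theorem grot_involutions_conjugate (m : ℕ) (hm : 3 ≤ m) (hodd : Odd m) :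
    (∀ r : ℤ, grot m r ∈ G1 m ∧ grot m r * grot m r = 1 ∧ grot m r ≠ 1) ∧
    (∀ r s : ℤ, ∃ h ∈ G1 m, h * grot m r * h⁻¹ = grot m s) := by
  obtain ⟨t, ht⟩ := hodd
  have ht' : (m : ℤ) = 2 * t + 1 := by exact_mod_cast ht
  have hm0 : (m : ℝ) ≠ 0 := Nat.cast_ne_zero.mpr (by omega)
  constructor
  · intro r
    refine ⟨?_, ?_, ?_⟩
    · rw [grot_eq]
      have h := mul_mem (mem4 m) (rotB_mem m r r)
      rw [rotD_mul_rotB] at h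
      convert h using 2 <;> ring
    · rw [grot_eq, rotG_mul_rotG, sub_self, zero_add, sub_self, zero_add, rotA_pi_pi]
    · rw [grot_eq]; exact rotG_ne_one _ _
  · intro r s
    rcases Int.even_or_odd (r - s) with ⟨k, hk⟩ | ⟨k, hk⟩
    · refine ⟨rotA (k * (π / m)) (k * (π / 2)), rotA_mem m k k, ?_⟩
      have hkr : (r : ℝ) = s + k + k := by
        have h0 : r = s + k + k := by omega
        exact_mod_cast h0
      have key : rotA (k * (π / m)) (k * (π / 2)) * grot m r
          = grot m s * rotA (k * (π / m)) (k * (π / 2)) := by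
        rw [grot_eq, grot_eq, rotA_mul_rotG, rotG_mul_rotA,
          show (r:ℝ) * (π / m) - k * (π / m) = s * (π / m) + k * (π / m) from by
            rw [hkr]; ring,
          show (r:ℝ) * (π / 2) - π / 4 - k * (π / 2)
              = (s * (π / 2) - π / 4) + k * (π / 2) from by rw [hkr]; ring]
        ring_nf
      rw [key, mul_inv_cancel_right]
    · refine ⟨rotB (((k - t : ℤ) : ℝ) * (π / m)) (((k + s - 1 : ℤ) : ℝ) * (π / 2)),
        rotB_mem m (k - t) (k + s - 1), ?_⟩
      have h1 : (r : ℝ) = s + 2 * (((k - t : ℤ) : ℝ)) + m := by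
        have h0 : r = s + 2 * (k - t) + m := by omega
        exact_mod_cast h0
      have h2 : (r : ℝ) + s - 2 * (((k + s - 1 : ℤ) : ℝ)) = 3 := by
        have h0 : r + s - 2 * (k + s - 1) = 3 := by omega
        exact_mod_cast h0
      have hπ : (m : ℝ) * (π / m) = π := by field_simp
      have key : rotB (((k - t : ℤ) : ℝ) * (π / m)) (((k + s - 1 : ℤ) : ℝ) * (π / 2))
            * grot m r
          = grot m s
            * rotB (((k - t : ℤ) : ℝ) * (π / m)) (((k + s - 1 : ℤ) : ℝ) * (π / 2)) := by
        rw [grot_eq, grot_eq, rotB_mul_rotG, rotG_mul_rotB,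
          show (r:ℝ) * (π / m) - ((k - t : ℤ) : ℝ) * (π / m)
              = ((s:ℝ) * (π / m) + ((k - t : ℤ) : ℝ) * (π / m)) + π from by
            linear_combination (π / (m:ℝ)) * h1 + hπ,
          show (r:ℝ) * (π / 2) - π / 4 - ((k + s - 1 : ℤ) : ℝ) * (π / 2) + π
              = (((k + s - 1 : ℤ) : ℝ) * (π / 2) - ((s:ℝ) * (π / 2) - π / 4) + π) + π from by
            linear_combination (π / 2) * h2,
          rotD_pi]
        ring_nf
      rw [key, mul_inv_cancel_right]
end
end

section
/- Let m ≥ 3 be an odd integer. For every nonzero quaternion x, the isotropy (stabilizer) subgroup {g ∈ G₁(m) : g·x = x} has at most two elements. There exists a nonzero x whose stabilizer has exactly two elements. Moreover, whenever the stabilizer of a nonzero x has two elements with nontrivial element σ, the fixed-point space {y ∈ ℍ : σ·y = y} is a two-dimensional real subspace of ℍ ≅ ℝ⁴. -/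
noncomputable section

open Quaternion Real

/-! ### Auxiliary development -/

namespace G1Aux

open Quaternion Real

/-- The unit circle quaternion `cos θ + sin θ · i`. -/
def U (θ : ℝ) : Quaternion ℝ := ⟨Real.cos θ, Real.sin θ, 0, 0⟩

@[simp] lemma U_re (θ : ℝ) : (U θ).re = Real.cos θ := rfl
@[simp] lemma U_imI (θ : ℝ) : (U θ).imI = Real.sin θ := rfl
@[simp] lemma U_imJ (θ : ℝ) : (U θ).imJ = 0 := rfl
@[simp] lemma U_imK (θ : ℝ) : (U θ).imK = 0 := rfl

@[simp] lemma qj_re : qj.re = 0 := rfl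
@[simp] lemma qj_imI : qj.imI = 0 := rfl
@[simp] lemma qj_imJ : qj.imJ = 1 := rfl
@[simp] lemma qj_imK : qj.imK = 0 := rfl
@[simp] lemma qi_re : qi.re = 0 := rfl
@[simp] lemma qi_imI : qi.imI = 1 := rfl
@[simp] lemma qi_imJ : qi.imJ = 0 := rfl
@[simp] lemma qi_imK : qi.imK = 0 := rfl

lemma U_congr {a b : ℝ} (h : a = b) : U a = U b := by rw [h]

lemma U_zero : U 0 = 1 := by
  ext <;> simp

lemma U_mul (a b : ℝ) : U a * U b = U (a + b) := by
  ext <;> simp [Real.cos_add, Real.sin_add] <;> ring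

lemma star_U (a : ℝ) : star (U a) = U (-a) := by
  ext <;> simp [Real.cos_neg, Real.sin_neg]

lemma U_add_two_pi (a : ℝ) : U (a + 2 * π) = U a := by
  ext <;> simp [Real.cos_add_two_pi, Real.sin_add_two_pi]

lemma qj_mul_U (θ : ℝ) : qj * U θ = (⟨0, 0, Real.cos θ, -Real.sin θ⟩ : Quaternion ℝ) := by
  ext <;> simp

lemma P2 (a b : ℝ) : U a * (qj * U b) = qj * U (b - a) := by
  ext <;> simp [Real.cos_sub, Real.sin_sub] <;> ring

lemma P3 (a b : ℝ) : (qj * U a) * U b = qj * U (a + b) := by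
  ext <;> simp [Real.cos_add, Real.sin_add] <;> ring

lemma P4 (a b : ℝ) : (qj * U a) * (qj * U b) = U (b - a + π) := by
  ext <;> simp [Real.cos_add, Real.sin_add, Real.cos_sub, Real.sin_sub] <;> ring

lemma S2 (a : ℝ) : star (qj * U a) = qj * U (a + π) := by
  ext <;> simp [Real.cos_add, Real.sin_add]

lemma norm_U (θ : ℝ) : ‖U θ‖ = 1 :=
  norm_eq_one_of_normSq (by
    rw [Quaternion.normSq_def']
    simp [U, Real.sin_sq_add_cos_sq, Real.cos_sq_add_sin_sq])

lemma norm_form (u : Bool) (θ : ℝ) : ‖(cond u qj 1) * U θ‖ = 1 := by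
  cases u <;> simp [norm_mul, norm_qj, norm_U]

lemma form_self_star (u : Bool) (θ : ℝ) :
    ((cond u qj 1) * U θ) * star ((cond u qj 1) * U θ) = 1 :=
  self_mul_star_of_norm_one (norm_form u θ)

lemma form_star_self (u : Bool) (θ : ℝ) :
    star ((cond u qj 1) * U θ) * ((cond u qj 1) * U θ) = 1 :=
  star_mul_self_of_norm_one (norm_form u θ)

lemma compose_form (L₁ R₁ L₂ R₂ y : Quaternion ℝ) :
    star L₁ * (star L₂ * y * R₂) * R₁ = star (L₂ * L₁) * y * (R₂ * R₁) := by
  rw [star_mul]; simp only [mul_assoc]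

/-- Normal form for elements of `G₁(m)`. -/
def HF (m : ℕ) (g : Quaternion ℝ ≃ₗ[ℝ] Quaternion ℝ) : Prop :=
  ∃ (u v : Bool) (a b : ℤ), (u = true ↔ b % 2 = 1) ∧
    ∀ y, g y = star ((cond u qj 1) * U ((a : ℝ) * π / (m : ℕ))) * y *
      ((cond v qj 1) * U ((b : ℝ) * π / 4))

lemma fix_imp {L R x : Quaternion ℝ} (hL : L * star L = 1)
    (h : star L * x * R = x) : x * R = L * x := by
  have h2 := congrArg (L * ·) h
  calc x * R = (L * star L) * x * R := by rw [hL, one_mul]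
    _ = L * (star L * x * R) := by noncomm_ring
    _ = L * x := by rw [h]

lemma cancel_left_star {L R x : Quaternion ℝ} (hL : star L * L = 1)
    (h : x * R = L * x) : star L * x * R = x := by
  calc star L * x * R = star L * (x * R) := by rw [mul_assoc]
    _ = star L * (L * x) := by rw [h]
    _ = (star L * L) * x := by rw [mul_assoc]
    _ = x := by rw [hL, one_mul]

lemma re_mul_comm (a b : Quaternion ℝ) : (a * b).re = (b * a).re := by
  simp only [Quaternion.re_mul]; ring

lemma cos_pi_div_odd_ne_zero {m : ℕ} (hm : 3 ≤ m) (hodd : Odd m) (d : ℤ) :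
    Real.cos ((d : ℝ) * π / (m : ℕ)) ≠ 0 := by
  intro h
  rw [Real.cos_eq_zero_iff] at h
  obtain ⟨k, hk⟩ := h
  have hm0 : ((m : ℕ) : ℝ) ≠ 0 := Nat.cast_ne_zero.mpr (by omega)
  have h3 : ((d * 2 : ℤ) : ℝ) * π = (((2 * k + 1) * (m : ℤ) : ℤ) : ℝ) * π := by
    push_cast
    rw [div_eq_iff hm0] at hk
    linear_combination 2 * hk
  have h4 : (d * 2 : ℤ) = (2 * k + 1) * (m : ℤ) := by
    have := mul_right_cancel₀ Real.pi_ne_zero h3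
    exact_mod_cast this
  have hoddm : Odd ((m : ℤ)) := (Int.odd_coe_nat m).mpr hodd
  obtain ⟨t, ht⟩ := hoddm
  have h5 : d * 2 = 4 * (k * t) + 2 * k + 2 * t + 1 := by
    rw [ht] at h4; linear_combination h4
  set n := k * t
  omega

lemma core {m : ℕ} (hm : 3 ≤ m) (hodd : Odd m) {x R : Quaternion ℝ} (hx : x ≠ 0) (d : ℤ)
    (hR : (∃ c : ℤ, R = U ((c : ℝ) * (π / 2))) ∨ (∃ β : ℝ, R = qj * U β))
    (hQR : x * R = U ((d : ℝ) * π / (m : ℕ)) * x) :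
    ∃ ε : ℝ, ε * ε = 1 ∧ U ((d : ℝ) * π / (m : ℕ)) = ((ε : ℝ) : Quaternion ℝ) ∧
      R = ((ε : ℝ) : Quaternion ℝ) := by
  have hre : R.re = Real.cos ((d : ℝ) * π / (m : ℕ)) := by
    have hR' : R = x⁻¹ * (U ((d : ℝ) * π / (m : ℕ)) * x) := by
      rw [← hQR, ← mul_assoc, inv_mul_cancel₀ hx, one_mul]
    rw [hR', re_mul_comm, mul_assoc, mul_inv_cancel₀ hx, mul_one, U_re]
  rcases hR with ⟨c, rfl⟩ | ⟨β, rfl⟩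
  · rcases Int.even_or_odd c with ⟨e, he⟩ | ⟨e, he⟩
    · -- even case
      have hang : (c : ℝ) * (π / 2) = (e : ℝ) * π := by
        push_cast [he]; ring
      have hsin : Real.sin ((e : ℝ) * π) = 0 := Real.sin_int_mul_pi e
      set θ := (d : ℝ) * π / (m : ℕ) with hθ
      have hcc : Real.cos θ = Real.cos ((e : ℝ) * π) := by
        rw [← hre]; simp [U, hang]
      have hcos2 : Real.cos ((e : ℝ) * π) ^ 2 = 1 := by
        nlinarith [Real.sin_sq_add_cos_sq ((e : ℝ) * π)]
      have hsq : Real.cos θ * Real.cos θ = 1 := by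
        rw [hcc]; nlinarith [hcos2]
      have hs2 : Real.sin θ ^ 2 = 0 := by
        nlinarith [Real.sin_sq_add_cos_sq θ]
      have hsinθ : Real.sin θ = 0 := pow_eq_zero_iff (by norm_num : (2:ℕ) ≠ 0) |>.mp hs2
      refine ⟨Real.cos θ, hsq, ?_, ?_⟩
      · ext <;> simp [hsinθ]
      · have h2 : x * U ((c : ℝ) * (π / 2)) = x * ((Real.cos θ : ℝ) : Quaternion ℝ) := by
          rw [hQR]
          rw [show (U θ : Quaternion ℝ) = ((Real.cos θ : ℝ) : Quaternion ℝ) by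
            ext <;> simp [hsinθ]]
          exact (Quaternion.coe_commutes _ _)
        exact mul_left_cancel₀ hx h2
    · exfalso
      have h0 : Real.cos ((c : ℝ) * (π / 2)) = 0 := by
        rw [Real.cos_eq_zero_iff]
        exact ⟨e, by push_cast [he]; ring⟩
      have : Real.cos ((d : ℝ) * π / (m : ℕ)) = 0 := by
        rw [← hre]; simpa [U] using h0
      exact cos_pi_div_odd_ne_zero hm hodd d this
  · exfalso
    have h0 : (qj * U β).re = 0 := by rw [qj_mul_U]
    have : Real.cos ((d : ℝ) * π / (m : ℕ)) = 0 := by rw [← hre, h0]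
    exact cos_pi_div_odd_ne_zero hm hodd d this

lemma U_pi_m (m : ℕ) : es m = U (π / (m : ℕ)) := rfl

set_option maxHeartbeats 3000000 in
lemma hf_mem {m : ℕ} (hm : 3 ≤ m) {g : Quaternion ℝ ≃ₗ[ℝ] Quaternion ℝ}
    (hg : g ∈ G1 m) : HF m g := by
  have hm0 : ((m : ℕ) : ℝ) ≠ 0 := Nat.cast_ne_zero.mpr (by omega)
  induction hg using Subgroup.closure_induction with
  | mem g hgS =>
    simp only [Set.mem_insert_iff, Set.mem_singleton_iff] at hgS
    rcases hgS with rfl | rfl | rfl | rfl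
    · refine ⟨false, false, 1, 0, by simp, fun y => ?_⟩
      show star (es m) * y * 1 = _
      simp only [cond, one_mul]
      rw [show ((1 : ℤ) : ℝ) * π / (m : ℕ) = π / (m : ℕ) by push_cast; ring,
        show ((0 : ℤ) : ℝ) * π / 4 = 0 by push_cast; ring, U_zero, ← U_pi_m]
    · refine ⟨false, false, 0, 2, by simp, fun y => ?_⟩
      show star 1 * y * qi = _
      simp only [cond, one_mul]
      rw [show ((0 : ℤ) : ℝ) * π / (m : ℕ) = 0 by push_cast; ring, U_zero,
        show ((2 : ℤ) : ℝ) * π / 4 = π / 2 by push_cast; ring]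
      rw [show (U (π / 2) : Quaternion ℝ) = qi by
        ext <;> simp [Real.cos_pi_div_two, Real.sin_pi_div_two]]
    · refine ⟨false, true, 0, 0, by simp, fun y => ?_⟩
      show star 1 * y * qj = _
      simp only [cond, one_mul]
      rw [show ((0 : ℤ) : ℝ) * π / (m : ℕ) = 0 by push_cast; ring,
        show ((0 : ℤ) : ℝ) * π / 4 = 0 by push_cast; ring, U_zero, mul_one]
    · refine ⟨true, false, 0, 1, by simp, fun y => ?_⟩
      show star qj * y * es 4 = _
      simp only [cond, one_mul]
      rw [show ((0 : ℤ) : ℝ) * π / (m : ℕ) = 0 by push_cast; ring, U_zero, mul_one,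
        show ((1 : ℤ) : ℝ) * π / 4 = π / ((4 : ℕ) : ℝ) by push_cast; ring, ← U_pi_m]
  | one =>
    refine ⟨false, false, 0, 0, by simp, fun y => ?_⟩
    simp only [cond, one_mul]
    rw [show ((0 : ℤ) : ℝ) * π / (m : ℕ) = 0 by push_cast; ring,
      show ((0 : ℤ) : ℝ) * π / 4 = 0 by push_cast; ring, U_zero]
    simp
  | mul g h _ _ hgF hhF =>
    obtain ⟨u₁, v₁, a₁, b₁, hp₁, hg₁⟩ := hgF
    obtain ⟨u₂, v₂, a₂, b₂, hp₂, hh₂⟩ := hhF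
    rcases u₁ <;> rcases u₂ <;> rcases v₁ <;> rcases v₂
    · simp only [Bool.cond_true, Bool.cond_false, one_mul] at hg₁ hh₂
      refine ⟨false, false, a₂ + a₁, b₂ + b₁, by simp at hp₁ hp₂ ⊢ <;> omega, fun y => ?_⟩
      rw [show (g * h) y = g (h y) from rfl, hh₂ y, hg₁]
      simp only [Bool.cond_true, Bool.cond_false, one_mul]
      rw [compose_form, U_mul, U_mul,
        U_congr (show (a₂:ℝ)*π/(m:ℕ) + (a₁:ℝ)*π/(m:ℕ) = ((a₂ + a₁ : ℤ):ℝ)*π/(m:ℕ) from by push_cast; field_simp; try ring),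
        U_congr (show (b₂:ℝ)*π/4 + (b₁:ℝ)*π/4 = ((b₂ + b₁ : ℤ):ℝ)*π/4 from by push_cast; try ring)]
    · simp only [Bool.cond_true, Bool.cond_false, one_mul] at hg₁ hh₂
      refine ⟨false, true, a₂ + a₁, b₂ + b₁, by simp at hp₁ hp₂ ⊢ <;> omega, fun y => ?_⟩
      rw [show (g * h) y = g (h y) from rfl, hh₂ y, hg₁]
      simp only [Bool.cond_true, Bool.cond_false, one_mul]
      rw [compose_form, U_mul, P3,
        U_congr (show (a₂:ℝ)*π/(m:ℕ) + (a₁:ℝ)*π/(m:ℕ) = ((a₂ + a₁ : ℤ):ℝ)*π/(m:ℕ) from by push_cast; field_simp; try ring),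
        U_congr (show (b₂:ℝ)*π/4 + (b₁:ℝ)*π/4 = ((b₂ + b₁ : ℤ):ℝ)*π/4 from by push_cast; try ring)]
    · simp only [Bool.cond_true, Bool.cond_false, one_mul] at hg₁ hh₂
      refine ⟨false, true, a₂ + a₁, b₁ - b₂, by simp at hp₁ hp₂ ⊢ <;> omega, fun y => ?_⟩
      rw [show (g * h) y = g (h y) from rfl, hh₂ y, hg₁]
      simp only [Bool.cond_true, Bool.cond_false, one_mul]
      rw [compose_form, U_mul, P2,
        U_congr (show (a₂:ℝ)*π/(m:ℕ) + (a₁:ℝ)*π/(m:ℕ) = ((a₂ + a₁ : ℤ):ℝ)*π/(m:ℕ) from by push_cast; field_simp; try ring),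
        U_congr (show (b₁:ℝ)*π/4 - (b₂:ℝ)*π/4 = ((b₁ - b₂ : ℤ):ℝ)*π/4 from by push_cast; try ring)]
    · simp only [Bool.cond_true, Bool.cond_false, one_mul] at hg₁ hh₂
      refine ⟨false, false, a₂ + a₁, b₁ - b₂ + 4, by simp at hp₁ hp₂ ⊢ <;> omega, fun y => ?_⟩
      rw [show (g * h) y = g (h y) from rfl, hh₂ y, hg₁]
      simp only [Bool.cond_true, Bool.cond_false, one_mul]
      rw [compose_form, U_mul, P4,
        U_congr (show (a₂:ℝ)*π/(m:ℕ) + (a₁:ℝ)*π/(m:ℕ) = ((a₂ + a₁ : ℤ):ℝ)*π/(m:ℕ) from by push_cast; field_simp; try ring),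
        U_congr (show (b₁:ℝ)*π/4 - (b₂:ℝ)*π/4 + π = ((b₁ - b₂ + 4 : ℤ):ℝ)*π/4 from by push_cast; try ring)]
    · simp only [Bool.cond_true, Bool.cond_false, one_mul] at hg₁ hh₂
      refine ⟨true, false, a₂ + a₁, b₂ + b₁, by simp at hp₁ hp₂ ⊢ <;> omega, fun y => ?_⟩
      rw [show (g * h) y = g (h y) from rfl, hh₂ y, hg₁]
      simp only [Bool.cond_true, Bool.cond_false, one_mul]
      rw [compose_form, P3, U_mul,
        U_congr (show (a₂:ℝ)*π/(m:ℕ) + (a₁:ℝ)*π/(m:ℕ) = ((a₂ + a₁ : ℤ):ℝ)*π/(m:ℕ) from by push_cast; field_simp; try ring),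
        U_congr (show (b₂:ℝ)*π/4 + (b₁:ℝ)*π/4 = ((b₂ + b₁ : ℤ):ℝ)*π/4 from by push_cast; try ring)]
    · simp only [Bool.cond_true, Bool.cond_false, one_mul] at hg₁ hh₂
      refine ⟨true, true, a₂ + a₁, b₂ + b₁, by simp at hp₁ hp₂ ⊢ <;> omega, fun y => ?_⟩
      rw [show (g * h) y = g (h y) from rfl, hh₂ y, hg₁]
      simp only [Bool.cond_true, Bool.cond_false, one_mul]
      rw [compose_form, P3, P3,
        U_congr (show (a₂:ℝ)*π/(m:ℕ) + (a₁:ℝ)*π/(m:ℕ) = ((a₂ + a₁ : ℤ):ℝ)*π/(m:ℕ) from by push_cast; field_simp; try ring),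
        U_congr (show (b₂:ℝ)*π/4 + (b₁:ℝ)*π/4 = ((b₂ + b₁ : ℤ):ℝ)*π/4 from by push_cast; try ring)]
    · simp only [Bool.cond_true, Bool.cond_false, one_mul] at hg₁ hh₂
      refine ⟨true, true, a₂ + a₁, b₁ - b₂, by simp at hp₁ hp₂ ⊢ <;> omega, fun y => ?_⟩
      rw [show (g * h) y = g (h y) from rfl, hh₂ y, hg₁]
      simp only [Bool.cond_true, Bool.cond_false, one_mul]
      rw [compose_form, P3, P2,
        U_congr (show (a₂:ℝ)*π/(m:ℕ) + (a₁:ℝ)*π/(m:ℕ) = ((a₂ + a₁ : ℤ):ℝ)*π/(m:ℕ) from by push_cast; field_simp; try ring),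
        U_congr (show (b₁:ℝ)*π/4 - (b₂:ℝ)*π/4 = ((b₁ - b₂ : ℤ):ℝ)*π/4 from by push_cast; try ring)]
    · simp only [Bool.cond_true, Bool.cond_false, one_mul] at hg₁ hh₂
      refine ⟨true, false, a₂ + a₁, b₁ - b₂ + 4, by simp at hp₁ hp₂ ⊢ <;> omega, fun y => ?_⟩
      rw [show (g * h) y = g (h y) from rfl, hh₂ y, hg₁]
      simp only [Bool.cond_true, Bool.cond_false, one_mul]
      rw [compose_form, P3, P4,
        U_congr (show (a₂:ℝ)*π/(m:ℕ) + (a₁:ℝ)*π/(m:ℕ) = ((a₂ + a₁ : ℤ):ℝ)*π/(m:ℕ) from by push_cast; field_simp; try ring),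
        U_congr (show (b₁:ℝ)*π/4 - (b₂:ℝ)*π/4 + π = ((b₁ - b₂ + 4 : ℤ):ℝ)*π/4 from by push_cast; try ring)]
    · simp only [Bool.cond_true, Bool.cond_false, one_mul] at hg₁ hh₂
      refine ⟨true, false, a₁ - a₂, b₂ + b₁, by simp at hp₁ hp₂ ⊢ <;> omega, fun y => ?_⟩
      rw [show (g * h) y = g (h y) from rfl, hh₂ y, hg₁]
      simp only [Bool.cond_true, Bool.cond_false, one_mul]
      rw [compose_form, P2, U_mul,
        U_congr (show (a₁:ℝ)*π/(m:ℕ) - (a₂:ℝ)*π/(m:ℕ) = ((a₁ - a₂ : ℤ):ℝ)*π/(m:ℕ) from by push_cast; field_simp; try ring),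
        U_congr (show (b₂:ℝ)*π/4 + (b₁:ℝ)*π/4 = ((b₂ + b₁ : ℤ):ℝ)*π/4 from by push_cast; try ring)]
    · simp only [Bool.cond_true, Bool.cond_false, one_mul] at hg₁ hh₂
      refine ⟨true, true, a₁ - a₂, b₂ + b₁, by simp at hp₁ hp₂ ⊢ <;> omega, fun y => ?_⟩
      rw [show (g * h) y = g (h y) from rfl, hh₂ y, hg₁]
      simp only [Bool.cond_true, Bool.cond_false, one_mul]
      rw [compose_form, P2, P3,
        U_congr (show (a₁:ℝ)*π/(m:ℕ) - (a₂:ℝ)*π/(m:ℕ) = ((a₁ - a₂ : ℤ):ℝ)*π/(m:ℕ) from by push_cast; field_simp; try ring),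
        U_congr (show (b₂:ℝ)*π/4 + (b₁:ℝ)*π/4 = ((b₂ + b₁ : ℤ):ℝ)*π/4 from by push_cast; try ring)]
    · simp only [Bool.cond_true, Bool.cond_false, one_mul] at hg₁ hh₂
      refine ⟨true, true, a₁ - a₂, b₁ - b₂, by simp at hp₁ hp₂ ⊢ <;> omega, fun y => ?_⟩
      rw [show (g * h) y = g (h y) from rfl, hh₂ y, hg₁]
      simp only [Bool.cond_true, Bool.cond_false, one_mul]
      rw [compose_form, P2, P2,
        U_congr (show (a₁:ℝ)*π/(m:ℕ) - (a₂:ℝ)*π/(m:ℕ) = ((a₁ - a₂ : ℤ):ℝ)*π/(m:ℕ) from by push_cast; field_simp; try ring),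
        U_congr (show (b₁:ℝ)*π/4 - (b₂:ℝ)*π/4 = ((b₁ - b₂ : ℤ):ℝ)*π/4 from by push_cast; try ring)]
    · simp only [Bool.cond_true, Bool.cond_false, one_mul] at hg₁ hh₂
      refine ⟨true, false, a₁ - a₂, b₁ - b₂ + 4, by simp at hp₁ hp₂ ⊢ <;> omega, fun y => ?_⟩
      rw [show (g * h) y = g (h y) from rfl, hh₂ y, hg₁]
      simp only [Bool.cond_true, Bool.cond_false, one_mul]
      rw [compose_form, P2, P4,
        U_congr (show (a₁:ℝ)*π/(m:ℕ) - (a₂:ℝ)*π/(m:ℕ) = ((a₁ - a₂ : ℤ):ℝ)*π/(m:ℕ) from by push_cast; field_simp; try ring),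
        U_congr (show (b₁:ℝ)*π/4 - (b₂:ℝ)*π/4 + π = ((b₁ - b₂ + 4 : ℤ):ℝ)*π/4 from by push_cast; try ring)]
    · simp only [Bool.cond_true, Bool.cond_false, one_mul] at hg₁ hh₂
      refine ⟨false, false, a₁ - a₂ + (m:ℤ), b₂ + b₁, by simp at hp₁ hp₂ ⊢ <;> omega, fun y => ?_⟩
      rw [show (g * h) y = g (h y) from rfl, hh₂ y, hg₁]
      simp only [Bool.cond_true, Bool.cond_false, one_mul]
      rw [compose_form, P4, U_mul,
        U_congr (show (a₁:ℝ)*π/(m:ℕ) - (a₂:ℝ)*π/(m:ℕ) + π = ((a₁ - a₂ + (m:ℤ) : ℤ):ℝ)*π/(m:ℕ) from by push_cast; field_simp; try ring),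
        U_congr (show (b₂:ℝ)*π/4 + (b₁:ℝ)*π/4 = ((b₂ + b₁ : ℤ):ℝ)*π/4 from by push_cast; try ring)]
    · simp only [Bool.cond_true, Bool.cond_false, one_mul] at hg₁ hh₂
      refine ⟨false, true, a₁ - a₂ + (m:ℤ), b₂ + b₁, by simp at hp₁ hp₂ ⊢ <;> omega, fun y => ?_⟩
      rw [show (g * h) y = g (h y) from rfl, hh₂ y, hg₁]
      simp only [Bool.cond_true, Bool.cond_false, one_mul]
      rw [compose_form, P4, P3,
        U_congr (show (a₁:ℝ)*π/(m:ℕ) - (a₂:ℝ)*π/(m:ℕ) + π = ((a₁ - a₂ + (m:ℤ) : ℤ):ℝ)*π/(m:ℕ) from by push_cast; field_simp; try ring),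
        U_congr (show (b₂:ℝ)*π/4 + (b₁:ℝ)*π/4 = ((b₂ + b₁ : ℤ):ℝ)*π/4 from by push_cast; try ring)]
    · simp only [Bool.cond_true, Bool.cond_false, one_mul] at hg₁ hh₂
      refine ⟨false, true, a₁ - a₂ + (m:ℤ), b₁ - b₂, by simp at hp₁ hp₂ ⊢ <;> omega, fun y => ?_⟩
      rw [show (g * h) y = g (h y) from rfl, hh₂ y, hg₁]
      simp only [Bool.cond_true, Bool.cond_false, one_mul]
      rw [compose_form, P4, P2,
        U_congr (show (a₁:ℝ)*π/(m:ℕ) - (a₂:ℝ)*π/(m:ℕ) + π = ((a₁ - a₂ + (m:ℤ) : ℤ):ℝ)*π/(m:ℕ) from by push_cast; field_simp; try ring),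
        U_congr (show (b₁:ℝ)*π/4 - (b₂:ℝ)*π/4 = ((b₁ - b₂ : ℤ):ℝ)*π/4 from by push_cast; try ring)]
    · simp only [Bool.cond_true, Bool.cond_false, one_mul] at hg₁ hh₂
      refine ⟨false, false, a₁ - a₂ + (m:ℤ), b₁ - b₂ + 4, by simp at hp₁ hp₂ ⊢ <;> omega, fun y => ?_⟩
      rw [show (g * h) y = g (h y) from rfl, hh₂ y, hg₁]
      simp only [Bool.cond_true, Bool.cond_false, one_mul]
      rw [compose_form, P4, P4,
        U_congr (show (a₁:ℝ)*π/(m:ℕ) - (a₂:ℝ)*π/(m:ℕ) + π = ((a₁ - a₂ + (m:ℤ) : ℤ):ℝ)*π/(m:ℕ) from by push_cast; field_simp; try ring),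
        U_congr (show (b₁:ℝ)*π/4 - (b₂:ℝ)*π/4 + π = ((b₁ - b₂ + 4 : ℤ):ℝ)*π/4 from by push_cast; try ring)]
  | inv g _ hgF =>
    obtain ⟨u, v, a, b, hp, hgf⟩ := hgF
    have key : ∀ z, g (((cond u qj 1) * U ((a : ℝ) * π / (m : ℕ))) * z *
        star ((cond v qj 1) * U ((b : ℝ) * π / 4))) = z := by
      intro z
      rw [hgf]
      calc star ((cond u qj 1) * U ((a : ℝ) * π / (m : ℕ))) *
            (((cond u qj 1) * U ((a : ℝ) * π / (m : ℕ))) * z *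
              star ((cond v qj 1) * U ((b : ℝ) * π / 4))) *
            ((cond v qj 1) * U ((b : ℝ) * π / 4))
          = (star ((cond u qj 1) * U ((a : ℝ) * π / (m : ℕ))) *
             ((cond u qj 1) * U ((a : ℝ) * π / (m : ℕ)))) * z *
            (star ((cond v qj 1) * U ((b : ℝ) * π / 4)) *
             ((cond v qj 1) * U ((b : ℝ) * π / 4))) := by simp only [mul_assoc]
        _ = z := by rw [form_star_self, form_star_self, one_mul, mul_one]
    have hinv : ∀ y, g⁻¹ y = ((cond u qj 1) * U ((a : ℝ) * π / (m : ℕ))) * y *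
        star ((cond v qj 1) * U ((b : ℝ) * π / 4)) := by
      intro y
      have h1 : g⁻¹ (g (((cond u qj 1) * U ((a : ℝ) * π / (m : ℕ))) * y *
          star ((cond v qj 1) * U ((b : ℝ) * π / 4)))) = _ := rfl
      calc g⁻¹ y = g⁻¹ (g (((cond u qj 1) * U ((a : ℝ) * π / (m : ℕ))) * y *
            star ((cond v qj 1) * U ((b : ℝ) * π / 4)))) := by rw [key y]
        _ = (g⁻¹ * g) (((cond u qj 1) * U ((a : ℝ) * π / (m : ℕ))) * y *
            star ((cond v qj 1) * U ((b : ℝ) * π / 4))) := rfl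
        _ = _ := by rw [inv_mul_cancel]; rfl
    refine ⟨u, v, if u then a + m else -a, if v then b + 4 else -b, by
      rcases u <;> rcases v <;> simp at hp ⊢ <;> omega, fun y => ?_⟩
    rw [hinv y]
    congr 1
    · congr 1
      rcases u <;> simp only [cond, if_true, if_false, Bool.cond_true, Bool.cond_false, one_mul]
      · rw [star_U]
        exact (U_congr (by push_cast; ring)).symm
      · rw [S2]
        refine (congrArg _ ?_).symm
        rw [show ((a + (m:ℤ) : ℤ) : ℝ) * π / (m : ℕ) + π = (a : ℝ) * π / (m : ℕ) + 2 * π by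
          push_cast; field_simp; ring, U_add_two_pi]
    · rcases v <;> simp only [cond, if_true, if_false, Bool.cond_true, Bool.cond_false, one_mul]
      · rw [star_U]
        exact (U_congr (by push_cast; ring)).symm
      · rw [S2]
        refine (congrArg _ ?_).symm
        exact U_congr (by push_cast; ring)

lemma triv_of_ufalse {m : ℕ} (hm : 3 ≤ m) (hodd : Odd m) {x : Quaternion ℝ} (hx : x ≠ 0)
    {g : Quaternion ℝ ≃ₗ[ℝ] Quaternion ℝ} (v : Bool) (a b : ℤ) (hp : ¬ (b % 2 = 1))
    (hg : ∀ y, g y = star (U ((a : ℝ) * π / (m : ℕ))) * y * ((cond v qj 1) * U ((b : ℝ) * π / 4)))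
    (hgx : g x = x) : g = 1 := by
  set R := (cond v qj 1) * U ((b : ℝ) * π / 4) with hRdef
  have hfix : star (U ((a : ℝ) * π / (m : ℕ))) * x * R = x := (hg x).symm.trans hgx
  have hE1 : x * R = U ((a : ℝ) * π / (m : ℕ)) * x :=
    fix_imp (self_mul_star_of_norm_one (norm_U _)) hfix
  have hRshape : (∃ c : ℤ, R = U ((c : ℝ) * (π / 2))) ∨ (∃ β : ℝ, R = qj * U β) := by
    rcases v with _ | _
    · left
      obtain ⟨c, hc⟩ : ∃ c : ℤ, b = 2 * c := ⟨b / 2, by omega⟩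
      refine ⟨c, ?_⟩
      rw [hRdef]
      simp only [Bool.cond_false, one_mul]
      refine U_congr ?_
      have hcast : (b : ℝ) = 2 * (c : ℝ) := by exact_mod_cast hc
      rw [hcast]; ring
    · right
      exact ⟨(b : ℝ) * π / 4, by rw [hRdef]; rfl⟩
  obtain ⟨ε, hε, hQ, hRe⟩ := core hm hodd hx a hRshape hE1
  apply LinearEquiv.ext
  intro y
  rw [hg y, hQ, hRe]
  rcases mul_self_eq_one_iff.mp hε with h1 | h1 <;> subst h1
  · show _ = y
    simp
  · show _ = y
    simp

lemma stab_eq {m : ℕ} (hm : 3 ≤ m) (hodd : Odd m) {x : Quaternion ℝ} (hx : x ≠ 0)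
    {g h : Quaternion ℝ ≃ₗ[ℝ] Quaternion ℝ} (hgF : HF m g) (hhF : HF m h)
    (hgx : g x = x) (hhx : h x = x) (hg1 : g ≠ 1) (hh1 : h ≠ 1) : g = h := by
  obtain ⟨u₁, v₁, a₁, b₁, hp₁, hg₁⟩ := hgF
  obtain ⟨u₂, v₂, a₂, b₂, hp₂, hh₂⟩ := hhF
  rcases u₁ with _ | _
  · refine absurd (triv_of_ufalse hm hodd hx v₁ a₁ b₁ (by simpa using hp₁)
      (fun y => by simpa only [Bool.cond_false, one_mul] using hg₁ y) hgx) hg1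
  rcases u₂ with _ | _
  · refine absurd (triv_of_ufalse hm hodd hx v₂ a₂ b₂ (by simpa using hp₂)
      (fun y => by simpa only [Bool.cond_false, one_mul] using hh₂ y) hhx) hh1
  simp only [Bool.cond_true] at hg₁ hh₂
  set L₁ := qj * U ((a₁ : ℝ) * π / (m : ℕ)) with hL₁def
  set L₂ := qj * U ((a₂ : ℝ) * π / (m : ℕ)) with hL₂def
  set R₁ := (cond v₁ qj 1) * U ((b₁ : ℝ) * π / 4) with hR₁def
  set R₂ := (cond v₂ qj 1) * U ((b₂ : ℝ) * π / 4) with hR₂def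
  have hnL₂ : ‖L₂‖ = 1 := by rw [hL₂def]; simpa using norm_form true _
  have hnR₂ : ‖R₂‖ = 1 := by rw [hR₂def]; exact norm_form v₂ _
  have hnL₁ : ‖L₁‖ = 1 := by rw [hL₁def]; simpa using norm_form true _
  have hfix₁ : star L₁ * x * R₁ = x := (hg₁ x).symm.trans hgx
  have hfix₂ : star L₂ * x * R₂ = x := (hh₂ x).symm.trans hhx
  have hE1 : x * R₁ = L₁ * x := fix_imp (self_mul_star_of_norm_one hnL₁) hfix₁
  have hstar2 : star L₂ * x = x * star R₂ := by
    calc star L₂ * x = star L₂ * x * (R₂ * star R₂) := by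
          rw [self_mul_star_of_norm_one hnR₂, mul_one]
      _ = (star L₂ * x * R₂) * star R₂ := by simp only [mul_assoc]
      _ = x * star R₂ := by rw [hfix₂]
  have hQ : star L₂ * L₁ = U (((a₁ - a₂ : ℤ) : ℝ) * π / (m : ℕ)) := by
    rw [hL₁def, hL₂def, S2, P4]
    exact U_congr (by push_cast; ring)
  have hxR : x * (star R₂ * R₁) = U (((a₁ - a₂ : ℤ) : ℝ) * π / (m : ℕ)) * x := by
    calc x * (star R₂ * R₁) = (x * star R₂) * R₁ := by rw [mul_assoc]
      _ = (star L₂ * x) * R₁ := by rw [← hstar2]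
      _ = star L₂ * (x * R₁) := by rw [mul_assoc]
      _ = star L₂ * (L₁ * x) := by rw [hE1]
      _ = (star L₂ * L₁) * x := by rw [← mul_assoc]
      _ = _ := by rw [hQ]
  have hb₁ : b₁ % 2 = 1 := hp₁.mp rfl
  have hb₂ : b₂ % 2 = 1 := hp₂.mp rfl
  have hRshape : (∃ c : ℤ, star R₂ * R₁ = U ((c : ℝ) * (π / 2))) ∨
      (∃ β : ℝ, star R₂ * R₁ = qj * U β) := by
    obtain ⟨c, hc⟩ : ∃ c : ℤ, b₁ - b₂ = 2 * c := ⟨(b₁ - b₂) / 2, by omega⟩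
    have hcast : (b₁ : ℝ) - (b₂ : ℝ) = 2 * (c : ℝ) := by exact_mod_cast hc
    rw [hR₁def, hR₂def]
    rcases v₁ with _ | _ <;> rcases v₂ with _ | _ <;>
      simp only [Bool.cond_true, Bool.cond_false, one_mul]
    · left
      refine ⟨c, ?_⟩
      rw [star_U, U_mul]
      exact U_congr (by linear_combination (π/4) * hcast)
    · right
      rw [S2, P3]
      exact ⟨_, rfl⟩
    · right
      rw [star_U, P2]
      exact ⟨_, rfl⟩
    · left
      refine ⟨c, ?_⟩
      rw [S2, P4]
      refine U_congr ?_
      have : (b₁ : ℝ) * π / 4 - ((b₂ : ℝ) * π / 4 + π) + π = (b₁ : ℝ) * π / 4 - (b₂ : ℝ) * π / 4 := by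
        ring
      rw [this]
      linear_combination (π/4) * hcast
  obtain ⟨ε, hε, hQε, hRε⟩ := core hm hodd hx (a₁ - a₂) hRshape hxR
  have hQ2 : star L₂ * L₁ = ((ε : ℝ) : Quaternion ℝ) := hQ.trans hQε
  have hL : L₁ = L₂ * ((ε : ℝ) : Quaternion ℝ) := by
    calc L₁ = (L₂ * star L₂) * L₁ := by rw [self_mul_star_of_norm_one hnL₂, one_mul]
      _ = L₂ * (star L₂ * L₁) := by rw [mul_assoc]
      _ = L₂ * ((ε : ℝ) : Quaternion ℝ) := by rw [hQ2]
  have hRR : R₁ = R₂ * ((ε : ℝ) : Quaternion ℝ) := by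
    calc R₁ = (R₂ * star R₂) * R₁ := by rw [self_mul_star_of_norm_one hnR₂, one_mul]
      _ = R₂ * (star R₂ * R₁) := by rw [mul_assoc]
      _ = R₂ * ((ε : ℝ) : Quaternion ℝ) := by rw [hRε]
  apply LinearEquiv.ext
  intro y
  rw [hg₁ y, hh₂ y, hL, hRR]
  rcases mul_self_eq_one_iff.mp hε with h1 | h1 <;> subst h1
  · simp
  · simp [star_mul, mul_neg, neg_mul, neg_neg]

lemma qj_form_comm {θ : ℝ} {z : Quaternion ℝ} (h : z * (qj * U θ) = (qj * U θ) * z) :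
    ∃ α β : ℝ, z = ((α : ℝ) : Quaternion ℝ) + ((β : ℝ) : Quaternion ℝ) * (qj * U θ) := by
  have hcs := Real.sin_sq_add_cos_sq θ
  have hq := qj_mul_U θ
  have hqre : (qj * U θ).re = 0 := by rw [hq]
  have hqi : (qj * U θ).imI = 0 := by rw [hq]
  have hqj : (qj * U θ).imJ = Real.cos θ := by rw [hq]
  have hqk : (qj * U θ).imK = -Real.sin θ := by rw [hq]
  have e1 := congrArg QuaternionAlgebra.imI h
  have e2 := congrArg QuaternionAlgebra.imJ h
  have e3 := congrArg QuaternionAlgebra.imK h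
  simp [Quaternion.imI_mul, Quaternion.imJ_mul, Quaternion.imK_mul] at e1 e2 e3
  have h2 : Real.sin θ * z.imI = 0 := by linarith
  have h3 : Real.cos θ * z.imI = 0 := by linarith
  have hu2 : z.imI ^ 2 = 0 := by nlinarith [h2, h3, hcs]
  have hu : z.imI = 0 := pow_eq_zero_iff (by norm_num : (2:ℕ) ≠ 0) |>.mp hu2
  have hJK : Real.sin θ * z.imJ + Real.cos θ * z.imK = 0 := by linarith
  by_cases hc : Real.cos θ = 0
  · have hs2 : Real.sin θ * Real.sin θ = 1 := by nlinarith [hcs]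
    have hs : Real.sin θ ≠ 0 := by intro h0; rw [h0] at hs2; norm_num at hs2
    have hv : z.imJ = 0 := by
      have h0 : Real.sin θ * z.imJ = 0 := by rw [hc] at hJK; linarith
      rcases mul_eq_zero.mp h0 with h0 | h0
      · exact absurd h0 hs
      · exact h0
    refine ⟨z.re, -z.imK / Real.sin θ, ?_⟩
    rw [Quaternion.coe_mul_eq_smul, Quaternion.ext_iff]
    refine ⟨?_, ?_, ?_, ?_⟩ <;>
      simp [hqre, hqi, hqj, hqk, hu, hv, hc]
    field_simp
  · refine ⟨z.re, z.imJ / Real.cos θ, ?_⟩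
    rw [Quaternion.coe_mul_eq_smul, Quaternion.ext_iff]
    refine ⟨?_, ?_, ?_, ?_⟩ <;>
      simp [hqre, hqi, hqj, hqk, hu]
    · field_simp
    · field_simp
      linarith [hJK]

end G1Aux

set_option maxHeartbeats 2000000 in
/-- Every isotropy subgroup of a nonzero vector for `G₁(m)` has at most two
elements; some nonzero vector has a stabilizer with exactly two elements; and
whenever the stabilizer of a nonzero vector is `{1, σ}` with `σ ≠ 1`, the
fixed-point space of `σ` is two-dimensional. -/
theorem G1_isotropy (m : ℕ) (hm : 3 ≤ m) (hodd : Odd m) :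
    (∀ x : Quaternion ℝ, x ≠ 0 → ∃ σ : Quaternion ℝ ≃ₗ[ℝ] Quaternion ℝ,
      {g : Quaternion ℝ ≃ₗ[ℝ] Quaternion ℝ | g ∈ G1 m ∧ g x = x} ⊆ {1, σ}) ∧
    (∃ x : Quaternion ℝ, x ≠ 0 ∧ ∃ σ : Quaternion ℝ ≃ₗ[ℝ] Quaternion ℝ, σ ≠ 1 ∧
      {g : Quaternion ℝ ≃ₗ[ℝ] Quaternion ℝ | g ∈ G1 m ∧ g x = x} = {1, σ}) ∧
    (∀ x : Quaternion ℝ, x ≠ 0 → ∀ σ : Quaternion ℝ ≃ₗ[ℝ] Quaternion ℝ, σ ≠ 1 →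
      {g : Quaternion ℝ ≃ₗ[ℝ] Quaternion ℝ | g ∈ G1 m ∧ g x = x} = {1, σ} →
      Module.finrank ℝ
        (LinearMap.ker ((σ : Quaternion ℝ →ₗ[ℝ] Quaternion ℝ) - LinearMap.id)) = 2) := by
  open G1Aux in
  refine ⟨?_, ?_, ?_⟩
  · -- Part 1
    intro x hx
    by_cases hE : ∃ g : Quaternion ℝ ≃ₗ[ℝ] Quaternion ℝ, (g ∈ G1 m ∧ g x = x) ∧ g ≠ 1
    · obtain ⟨σ, ⟨hσG, hσx⟩, hσ1⟩ := hE
      refine ⟨σ, fun g hg => ?_⟩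
      obtain ⟨hgG, hgx⟩ := hg
      simp only [Set.mem_insert_iff, Set.mem_singleton_iff]
      by_cases hg1 : g = 1
      · exact Or.inl hg1
      · exact Or.inr (stab_eq hm hodd hx (hf_mem hm hgG) (hf_mem hm hσG) hgx hσx hg1 hσ1)
    · push_neg at hE
      refine ⟨1, fun g hg => ?_⟩
      simp only [Set.mem_insert_iff, Set.mem_singleton_iff]
      exact Or.inl (hE g hg)
  · -- Part 2
    have hes4 : es 4 = U (π / 4) := by
      rw [U_pi_m]; exact U_congr (by norm_num)
    have hx0 : (1 + es 4 : Quaternion ℝ) ≠ 0 := by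
      intro h0
      have h1 : (1 + es 4 : Quaternion ℝ).re = 0 := by rw [h0]; simp
      rw [hes4] at h1
      simp at h1
      nlinarith [Real.sqrt_nonneg 2]
    have hnr : ‖qj * es 4‖ = 1 := by rw [norm_mul, norm_qj, norm_es]; ring
    set σ : Quaternion ℝ ≃ₗ[ℝ] Quaternion ℝ := qrot qj (qj * es 4) norm_qj hnr with hσdef
    have hσapp : ∀ y, σ y = star qj * y * (qj * es 4) := fun y => rfl
    have hstarqj : star qj = qj * U π := by
      rw [qj_mul_U]
      ext <;> simp [Real.cos_pi, Real.sin_pi]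
    have hσfix : σ (1 + es 4) = 1 + es 4 := by
      rw [hσapp, hstarqj, hes4]
      calc (qj * U π) * (1 + U (π/4)) * (qj * U (π/4))
          = ((qj * U π) * 1 + (qj * U π) * U (π/4)) * (qj * U (π/4)) := by rw [mul_add]
        _ = ((qj * U π) + (qj * U (π + π/4))) * (qj * U (π/4)) := by rw [mul_one, P3]
        _ = (qj * U π) * (qj * U (π/4)) + (qj * U (π + π/4)) * (qj * U (π/4)) := by
            rw [add_mul]
        _ = U (π/4 - π + π) + U (π/4 - (π + π/4) + π) := by rw [P4, P4]
        _ = U (π/4) + U 0 := by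
            rw [U_congr (show π/4 - π + π = π/4 by ring),
              U_congr (show π/4 - (π + π/4) + π = 0 by ring)]
        _ = 1 + U (π/4) := by rw [U_zero, add_comm]
    have hσ1 : σ ≠ 1 := by
      intro h
      have h1 : σ 1 = es 4 := by
        rw [hσapp, mul_one, ← mul_assoc, star_mul_self_of_norm_one norm_qj, one_mul]
      rw [h] at h1
      have h2 : (1 : Quaternion ℝ) = es 4 := h1.symm ▸ rfl
      have h3 := congrArg QuaternionAlgebra.imI h2
      rw [hes4] at h3
      simp at h3
      nlinarith [Real.sqrt_pos.mpr (by norm_num : (2:ℝ) > 0)]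
    have hσeq : σ = qrot qj (es 4) norm_qj (norm_es 4) * qrot 1 qj norm_one norm_qj := by
      apply LinearEquiv.ext
      intro y
      show star qj * y * (qj * es 4) = star qj * (star 1 * y * qj) * es 4
      rw [star_one, one_mul]
      simp only [mul_assoc]
    have hσG : σ ∈ G1 m := by
      rw [hσeq]
      exact Subgroup.mul_mem _ (Subgroup.subset_closure (by simp [Set.mem_insert_iff]))
        (Subgroup.subset_closure (by simp [Set.mem_insert_iff]))
    refine ⟨1 + es 4, hx0, σ, hσ1, ?_⟩
    apply Set.eq_of_subset_of_subset
    · intro g hg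
      obtain ⟨hgG, hgx⟩ := hg
      simp only [Set.mem_insert_iff, Set.mem_singleton_iff]
      by_cases hg1 : g = 1
      · exact Or.inl hg1
      · exact Or.inr (stab_eq hm hodd hx0 (hf_mem hm hgG) (hf_mem hm hσG) hgx hσfix hg1 hσ1)
    · intro g hg
      simp only [Set.mem_insert_iff, Set.mem_singleton_iff] at hg
      rcases hg with rfl | rfl
      · exact ⟨one_mem _, rfl⟩
      · exact ⟨hσG, hσfix⟩
  · -- Part 3
    intro x hx σ hσ1 hstab
    have hσmem : σ ∈ {g : Quaternion ℝ ≃ₗ[ℝ] Quaternion ℝ | g ∈ G1 m ∧ g x = x} := by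
      rw [hstab]; exact Set.mem_insert_of_mem _ rfl
    obtain ⟨hσG, hσx⟩ := hσmem
    obtain ⟨u, v, a, b, hp, hσf⟩ := hf_mem hm hσG
    rcases u with _ | _
    · exact absurd (triv_of_ufalse hm hodd hx v a b (by simpa using hp)
        (fun y => by simpa only [Bool.cond_false, one_mul] using hσf y) hσx) hσ1
    simp only [Bool.cond_true] at hσf
    set θ := (a : ℝ) * π / (m : ℕ) with hθdef
    set L := qj * U θ with hLdef
    set R := (cond v qj 1) * U ((b : ℝ) * π / 4) with hRdef
    have hnL : ‖L‖ = 1 := by rw [hLdef]; simpa using norm_form true θ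
    have hfix : star L * x * R = x := (hσf x).symm.trans hσx
    have hE1 : x * R = L * x := fix_imp (self_mul_star_of_norm_one hnL) hfix
    have hker : LinearMap.ker ((σ : Quaternion ℝ →ₗ[ℝ] Quaternion ℝ) - LinearMap.id) =
        Submodule.span ℝ {x, L * x} := by
      apply le_antisymm
      · intro y hy
        have hy' : σ y = y := by
          have h0 := LinearMap.mem_ker.mp hy
          simpa [sub_eq_zero] using h0
        have hyR : y * R = L * y := fix_imp (self_mul_star_of_norm_one hnL)
          ((hσf y).symm.trans hy')
        have hRval : R = x⁻¹ * (L * x) := by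
          rw [← hE1, ← mul_assoc, inv_mul_cancel₀ hx, one_mul]
        have hcomm : (y * x⁻¹) * L = L * (y * x⁻¹) := by
          have h1 : (y * x⁻¹) * L * x = L * y := by
            calc (y * x⁻¹) * L * x = y * (x⁻¹ * (L * x)) := by simp only [mul_assoc]
              _ = y * R := by rw [← hRval]
              _ = L * y := hyR
          calc (y * x⁻¹) * L = ((y * x⁻¹) * L * x) * x⁻¹ := by
                rw [mul_assoc ((y * x⁻¹) * L) x x⁻¹, mul_inv_cancel₀ hx, mul_one]
            _ = (L * y) * x⁻¹ := by rw [h1]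
            _ = L * (y * x⁻¹) := by rw [mul_assoc]
        have hcomm' : (y * x⁻¹) * (qj * U θ) = (qj * U θ) * (y * x⁻¹) := by
          rw [← hLdef]; exact hcomm
        obtain ⟨α, β, hz⟩ := qj_form_comm hcomm'
        have hyx : y = (y * x⁻¹) * x := by rw [mul_assoc, inv_mul_cancel₀ hx, mul_one]
        have hy2 : y = ((α : ℝ) : Quaternion ℝ) * x + ((β : ℝ) : Quaternion ℝ) * (L * x) := by
          conv_lhs => rw [hyx, hz]
          rw [hLdef, add_mul, mul_assoc]
        exact Submodule.mem_span_pair.mpr ⟨α, β, by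
          rw [← Quaternion.coe_mul_eq_smul, ← Quaternion.coe_mul_eq_smul]; exact hy2.symm⟩
      · rw [Submodule.span_le]
        intro z hz
        simp only [Set.mem_insert_iff, Set.mem_singleton_iff] at hz
        rcases hz with rfl | rfl
        · simp only [SetLike.mem_coe, LinearMap.mem_ker, LinearMap.sub_apply,
            LinearMap.id_coe, id_eq, LinearEquiv.coe_coe]
          rw [hσx, sub_self]
        · simp only [SetLike.mem_coe, LinearMap.mem_ker, LinearMap.sub_apply,
            LinearMap.id_coe, id_eq, LinearEquiv.coe_coe]
          have h1 : σ (L * x) = L * x := by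
            rw [hσf (L * x)]
            calc star L * (L * x) * R = (star L * L) * x * R := by simp only [mul_assoc]
              _ = x * R := by rw [star_mul_self_of_norm_one hnL, one_mul]
              _ = L * x := hE1
          rw [h1, sub_self]
    have hli : LinearIndependent ℝ ![x, L * x] := by
      rw [LinearIndependent.pair_iff]
      intro s t hst
      have h1 : (((s : ℝ) : Quaternion ℝ) + ((t : ℝ) : Quaternion ℝ) * L) * x = 0 := by
        rw [add_mul, mul_assoc, Quaternion.coe_mul_eq_smul, Quaternion.coe_mul_eq_smul]
        exact hst
      have h2 : ((s : ℝ) : Quaternion ℝ) + ((t : ℝ) : Quaternion ℝ) * L = 0 := by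
        rcases mul_eq_zero.mp h1 with h0 | h0
        · exact h0
        · exact absurd h0 hx
      rw [hLdef, Quaternion.coe_mul_eq_smul] at h2
      have hre := congrArg QuaternionAlgebra.re h2
      have hj := congrArg QuaternionAlgebra.imJ h2
      have hk := congrArg QuaternionAlgebra.imK h2
      simp at hre hj hk
      refine ⟨hre, ?_⟩
      rcases hj with ht | hcos
      · exact ht
      rcases hk with ht | hsin
      · exact ht
      exfalso
      nlinarith [Real.sin_sq_add_cos_sq θ]
    have hrange : Set.range ![x, L * x] = ({x, L * x} : Set (Quaternion ℝ)) := by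
      have h0 : Set.range ![x, L * x] = ({L * x, x} : Set (Quaternion ℝ)) := by simp
      rw [h0, Set.pair_comm]
    rw [hker, ← hrange, finrank_span_eq_card hli, Fintype.card_fin]
end
end
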